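/- If the empirical conditional mutual information vanishes, then the stochastic-complexity-based independence measure is nonpositive (Lemma 2, forward direction): let X, Y, Z be finite nonempty types, n ≥ 1, and x : Fin n → X, y : Fin n → Y, z : Fin n → Z data samples. If the empirical conditional mutual information satisfies Ĥ(x | z) − Ĥ(x | ⟨z, y⟩) = 0 and Ĥ(y | z) − Ĥ(y | ⟨z, x⟩) = 0, then SCI(x; y | z) ≤ 0. -/

import Mathlib

open Finset

/-- The multinomial NML regret `R(L, n)`: the sum over all count vectors
`(h_1, …, h_L)` with `h_1 + ⋯ + h_L = n` of the maximum likelihood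
`(n! / (h_1! ⋯ h_L!)) · ∏_v (h_v / n)^{h_v}` (with the convention `0^0 = 1`). -/
noncomputable def regret (L n : ℕ) : ℝ :=
  ∑ h ∈ Finset.Nat.antidiagonalTuple L n,
    (Nat.multinomial Finset.univ h : ℝ) * ∏ v, ((h v : ℝ) / (n : ℝ)) ^ (h v)

/-- The conditional regret term `Δ_k(w) = ∑_{v ∈ W} log R(k, |{i : w i = v}|)`. -/
noncomputable def condRegret (k : ℕ) {n : ℕ} {W : Type*} [Fintype W] [DecidableEq W]
    (w : Fin n → W) : ℝ :=
  ∑ v : W, Real.log (regret k (Finset.univ.filter (fun i => w i = v)).card)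

/-- The unnormalized empirical conditional entropy `n·Ĥ(a | w) =
∑_{v} ∑_{u} N(u, v) · log(N(v) / N(u, v))`, where `N(u, v)` counts samples with
`a i = u` and `w i = v`, `N(v)` those with `w i = v`, and terms with
`N(u, v) = 0` vanish. -/
noncomputable def condEntN {n : ℕ} {A W : Type*}
    [Fintype A] [Fintype W] [DecidableEq A] [DecidableEq W]
    (a : Fin n → A) (w : Fin n → W) : ℝ :=
  ∑ v : W, ∑ u : A,
    ((Finset.univ.filter (fun i => a i = u ∧ w i = v)).card : ℝ) *
      Real.log (((Finset.univ.filter (fun i => w i = v)).card : ℝ) /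
        ((Finset.univ.filter (fun i => a i = u ∧ w i = v)).card : ℝ))

/-- The asymmetric stochastic-complexity score
`I_SC(x; y | z) = n·(Ĥ(x | z) − Ĥ(x | ⟨z, y⟩)) + Δ_{|X|}(z) − Δ_{|X|}(⟨z, y⟩)`. -/
noncomputable def ISC {n : ℕ} {X Y Z : Type*}
    [Fintype X] [Fintype Y] [Fintype Z] [DecidableEq X] [DecidableEq Y] [DecidableEq Z]
    (x : Fin n → X) (y : Fin n → Y) (z : Fin n → Z) : ℝ :=
  (condEntN x z - condEntN x (fun i => (z i, y i)))
    + condRegret (Fintype.card X) z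
    - condRegret (Fintype.card X) (fun i => (z i, y i))

/-- The stochastic complexity based independence measure
`SCI(x; y | z) = max(I_SC(x; y | z), I_SC(y; x | z))`. -/
noncomputable def SCI {n : ℕ} {X Y Z : Type*}
    [Fintype X] [Fintype Y] [Fintype Z] [DecidableEq X] [DecidableEq Y] [DecidableEq Z]
    (x : Fin n → X) (y : Fin n → Y) (z : Fin n → Z) : ℝ :=
  max (ISC x y z) (ISC y x z)


set_option linter.unusedSectionVars false

section Aux



variable {A : Type*} [Fintype A] [DecidableEq A]

/-- count of value `v` in the sample `f`. -/
def cnt {n : ℕ} (f : Fin n → A) (v : A) : ℕ := (Finset.univ.filter (fun i => f i = v)).card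

lemma cnt_eq_sum {n : ℕ} (f : Fin n → A) (v : A) :
    cnt f v = ∑ i : Fin n, if f i = v then 1 else 0 := by
  rw [cnt, Finset.card_filter]

lemma sum_cnt {n : ℕ} (f : Fin n → A) : ∑ v, cnt f v = n := by
  classical
  simp only [cnt_eq_sum]
  rw [Finset.sum_comm]
  simp

lemma cnt_mem_piAntidiag {n : ℕ} (f : Fin n → A) :
    cnt f ∈ Finset.piAntidiag (Finset.univ : Finset A) n := by
  rw [Finset.mem_piAntidiag]
  exact ⟨sum_cnt f, fun i _ => Finset.mem_univ i⟩

lemma prod_eq_prod_cnt {n : ℕ} {R : Type*} [CommMonoid R] (f : Fin n → A) (g : A → R) :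
    ∏ i : Fin n, g (f i) = ∏ v : A, g v ^ cnt f v := by
  classical
  rw [Finset.prod_comp]
  refine Finset.prod_subset (Finset.subset_univ _) ?_
  intro v _ hv
  have h0 : (Finset.univ.filter (fun i => f i = v)).card = 0 := by
    rw [Finset.card_eq_zero, Finset.filter_eq_empty_iff]
    intro i _
    exact fun h => hv (Finset.mem_image.2 ⟨i, Finset.mem_univ i, h⟩)
  rw [h0, pow_zero]

lemma card_cnt_fiber {n : ℕ} (h : A → ℕ) (hh : h ∈ Finset.piAntidiag (Finset.univ : Finset A) n) :
    (Finset.univ.filter (fun f : Fin n → A => cnt f = h)).card = Nat.multinomial Finset.univ h := by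
  classical
  have key : ∑ h' ∈ Finset.piAntidiag (Finset.univ : Finset A) n,
      (((Finset.univ.filter (fun f : Fin n → A => cnt f = h')).card : MvPolynomial A ℚ)) *
        ∏ v, MvPolynomial.X v ^ h' v
      = ∑ h' ∈ Finset.piAntidiag (Finset.univ : Finset A) n,
      ((Nat.multinomial Finset.univ h' : MvPolynomial A ℚ)) * ∏ v, MvPolynomial.X v ^ h' v := by
    rw [← Finset.sum_pow_eq_sum_piAntidiag (Finset.univ : Finset A) MvPolynomial.X n]
    have : ((∑ v, MvPolynomial.X v : MvPolynomial A ℚ)) ^ n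
        = ∑ f : Fin n → A, ∏ i : Fin n, MvPolynomial.X (f i) := by
      rw [← Fin.prod_const n (∑ v, MvPolynomial.X v : MvPolynomial A ℚ), Finset.prod_univ_sum]
      simp
    rw [this]
    rw [← Finset.sum_fiberwise_of_maps_to (fun f _ => cnt_mem_piAntidiag f)]
    refine Finset.sum_congr rfl fun h' _ => ?_
    have hconst : ∀ f ∈ Finset.univ.filter (fun f : Fin n → A => cnt f = h'),
        (∏ i : Fin n, MvPolynomial.X (f i) : MvPolynomial A ℚ)
          = ∏ v : A, MvPolynomial.X v ^ h' v := by
      intro f hf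
      rw [prod_eq_prod_cnt, (Finset.mem_filter.1 hf).2]
    rw [Finset.sum_congr rfl hconst, Finset.sum_const, nsmul_eq_mul]
  -- extract coefficient at the finsupp corresponding to h
  set D : A →₀ ℕ := Finsupp.equivFunOnFinite.symm h with hD
  have mono : ∀ h' : A → ℕ, (∏ v, MvPolynomial.X v ^ h' v : MvPolynomial A ℚ)
      = MvPolynomial.monomial (Finsupp.equivFunOnFinite.symm h') 1 := by
    intro h'
    rw [← MvPolynomial.prod_X_pow_eq_monomial]
    exact (Finset.prod_subset (Finset.subset_univ _) (by
      intro v _ hv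
      have : (Finsupp.equivFunOnFinite.symm h') v = 0 := by
        simpa using Finsupp.notMem_support_iff.1 hv
      simp only [Finsupp.coe_equivFunOnFinite_symm] at this ⊢
      rw [this, pow_zero])).symm
  have := congrArg (MvPolynomial.coeff D) key
  rw [MvPolynomial.coeff_sum, MvPolynomial.coeff_sum] at this
  have collapse : ∀ (c : (A → ℕ) → ℕ),
      (∑ h' ∈ Finset.piAntidiag (Finset.univ : Finset A) n,
        MvPolynomial.coeff D ((c h' : MvPolynomial A ℚ) * ∏ v, MvPolynomial.X v ^ h' v))
      = (c h : ℚ) := by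
    intro c
    have hmem : h ∈ Finset.piAntidiag (Finset.univ : Finset A) n := hh
    rw [Finset.sum_congr rfl (fun h' _ => ?_)]
    · rw [Finset.sum_ite_eq' (Finset.piAntidiag (Finset.univ : Finset A) n) h (fun h' => (c h' : ℚ)), if_pos hmem]
    · rw [mono h', ← MvPolynomial.C_eq_coe_nat, MvPolynomial.coeff_C_mul,
        MvPolynomial.coeff_monomial]
      have : (Finsupp.equivFunOnFinite.symm h' = D) ↔ h' = h := by
        rw [hD]
        exact Finsupp.equivFunOnFinite.symm.injective.eq_iff
      rw [if_congr this rfl rfl]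
      simp [mul_ite]
  rw [collapse, collapse] at this
  exact_mod_cast this

end Aux

set_option linter.unusedSectionVars false


/-- the regret as a sum over samples. -/
noncomputable def regretF (A : Type*) [Fintype A] [DecidableEq A] (n : ℕ) : ℝ :=
  ∑ f : Fin n → A, ∏ v : A, ((cnt f v : ℝ) / (n : ℝ)) ^ (cnt f v)

lemma regretF_eq_sum_piAntidiag (A : Type*) [Fintype A] [DecidableEq A] (n : ℕ) :
    regretF A n = ∑ h ∈ Finset.piAntidiag (Finset.univ : Finset A) n,
      (Nat.multinomial Finset.univ h : ℝ) * ∏ v, ((h v : ℝ) / (n : ℝ)) ^ (h v) := by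
  classical
  rw [regretF, ← Finset.sum_fiberwise_of_maps_to (fun f _ => cnt_mem_piAntidiag f)]
  refine Finset.sum_congr rfl fun h hh => ?_
  have hconst : ∀ f ∈ Finset.univ.filter (fun f : Fin n → A => cnt f = h),
      (∏ v : A, ((cnt f v : ℝ) / (n : ℝ)) ^ (cnt f v))
        = ∏ v : A, ((h v : ℝ) / (n : ℝ)) ^ (h v) := by
    intro f hf
    rw [(Finset.mem_filter.1 hf).2]
  rw [Finset.sum_congr rfl hconst, Finset.sum_const, nsmul_eq_mul, card_cnt_fiber h hh]

lemma antidiagonalTuple_eq_piAntidiag (L n : ℕ) :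
    Finset.Nat.antidiagonalTuple L n = Finset.piAntidiag (Finset.univ : Finset (Fin L)) n := by
  ext h
  rw [Finset.Nat.mem_antidiagonalTuple, Finset.mem_piAntidiag]
  exact ⟨fun hs => ⟨hs, fun i _ => Finset.mem_univ i⟩, fun hs => hs.1⟩

lemma regret_eq_regretF (A : Type*) [Fintype A] [DecidableEq A] (n : ℕ) :
    regret (Fintype.card A) n = regretF A n := by
  classical
  set L := Fintype.card A
  obtain σ : A ≃ Fin L := Fintype.equivFin A
  rw [regret, antidiagonalTuple_eq_piAntidiag, regretF_eq_sum_piAntidiag A n]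
  -- reindex the piAntidiag sums along σ
  refine Finset.sum_nbij' (fun h => h ∘ ⇑σ) (fun h => h ∘ ⇑σ.symm) ?_ ?_ ?_ ?_ ?_
  · intro h hh
    rw [Finset.mem_piAntidiag] at hh ⊢
    refine ⟨?_, fun i _ => Finset.mem_univ i⟩
    rw [← hh.1]
    exact Fintype.sum_equiv σ (fun v => h (σ v)) h (fun v => rfl)
  · intro h hh
    rw [Finset.mem_piAntidiag] at hh ⊢
    refine ⟨?_, fun i _ => Finset.mem_univ i⟩
    rw [← hh.1]
    exact Fintype.sum_equiv σ.symm (fun v => h (σ.symm v)) h (fun v => rfl)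
  · intro h _; funext v; simp
  · intro h _; funext v; simp
  · intro h _
    congr 1
    · congr 1
      rw [Nat.multinomial, Nat.multinomial]
      congr 1
      · congr 1
        exact Fintype.sum_equiv σ.symm _ _ (fun v => by simp)
      · exact Fintype.prod_equiv σ.symm _ _ (fun v => by simp)
    · exact Fintype.prod_equiv σ.symm _ _ (fun v => by simp)

/-- Gibbs' inequality in product form: the maximum-likelihood parameters maximize
the likelihood. -/
lemma gibbs {A : Type*} [Fintype A] (c : A → ℕ) (θ : A → ℝ) (hθ0 : ∀ v, 0 ≤ θ v)
    (hθ1 : ∑ v, θ v ≤ 1) :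
    ∏ v, θ v ^ (c v) ≤ ∏ v, ((c v : ℝ) / ((∑ v, c v : ℕ) : ℝ)) ^ (c v) := by
  classical
  set m : ℕ := ∑ v, c v with hm
  rcases Nat.eq_zero_or_pos m with h0 | hpos
  · have hs : ∑ v, c v = 0 := by rw [← h0]
    have hc0 : ∀ v, c v = 0 := fun v =>
      (Finset.sum_eq_zero_iff.1 hs) v (Finset.mem_univ v)
    simp [hc0]
  have hmR : (0:ℝ) < m := by exact_mod_cast hpos
  have hmne : (m:ℝ) ≠ 0 := ne_of_gt hmR
  set z : A → ℝ := fun v => if c v = 0 then 1 else θ v * m / c v with hz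
  have hz0 : ∀ v, 0 ≤ z v := by
    intro v
    rw [hz]
    by_cases h : c v = 0
    · simp [h]
    · simp only [h, if_false]
      have hc : (0:ℝ) < c v := Nat.cast_pos.2 (Nat.pos_of_ne_zero h)
      exact div_nonneg (mul_nonneg (hθ0 v) hmR.le) hc.le
  have amgm : ∏ v, z v ^ ((c v : ℝ) / m) ≤ ∑ v, ((c v : ℝ) / m) * z v :=
    Real.geom_mean_le_arith_mean_weighted Finset.univ _ _
      (fun v _ => by positivity)
      (by rw [← Finset.sum_div, ← Nat.cast_sum, ← hm, div_self hmne])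
      (fun v _ => hz0 v)
  have hsum : ∑ v, ((c v : ℝ) / m) * z v ≤ 1 := by
    refine le_trans (Finset.sum_le_sum (fun v _ => ?_)) hθ1
    rw [hz]
    by_cases h : c v = 0
    · simp [h, hθ0 v]
    · simp only [h, if_false]
      have hcne : ((c v : ℝ)) ≠ 0 := Nat.cast_ne_zero.2 h
      have heq : ((c v : ℝ) / m) * (θ v * m / c v) = θ v := by field_simp
      rw [heq]
  have key : ∏ v, z v ^ (c v) ≤ 1 := by
    have hrw : ∏ v, z v ^ (c v) = (∏ v, z v ^ ((c v : ℝ) / m)) ^ m := by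
      rw [← Finset.prod_pow]
      refine Finset.prod_congr rfl fun v _ => ?_
      rw [← Real.rpow_natCast (z v ^ ((c v : ℝ)/m)) m, ← Real.rpow_mul (hz0 v),
        div_mul_cancel₀ _ hmne, Real.rpow_natCast]
    rw [hrw]
    calc (∏ v, z v ^ ((c v : ℝ) / m)) ^ m ≤ 1 ^ m := by
          refine pow_le_pow_left₀ (Finset.prod_nonneg fun v _ => ?_) (le_trans amgm hsum) m
          exact Real.rpow_nonneg (hz0 v) _
      _ = 1 := one_pow m
  have hsplit : ∏ v, θ v ^ (c v) = (∏ v, z v ^ (c v)) * ∏ v, ((c v : ℝ) / m) ^ (c v) := by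
    rw [← Finset.prod_mul_distrib]
    refine Finset.prod_congr rfl fun v _ => ?_
    by_cases h : c v = 0
    · simp [h]
    · rw [hz]
      simp only [h, if_false]
      rw [← mul_pow]
      congr 1
      have hcne : ((c v : ℝ)) ≠ 0 := Nat.cast_ne_zero.2 h
      field_simp
  rw [hsplit]
  calc (∏ v, z v ^ (c v)) * ∏ v, ((c v : ℝ) / m) ^ (c v)
      ≤ 1 * ∏ v, ((c v : ℝ) / m) ^ (c v) := by
        refine mul_le_mul_of_nonneg_right key (Finset.prod_nonneg fun v _ => ?_)
        positivity
    _ = ∏ v, ((c v : ℝ) / m) ^ (c v) := one_mul _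

lemma gibbs_pair {A : Type*} [Fintype A] (c₁ c₂ : A → ℕ) (a b : ℕ)
    (h₁ : ∑ v, c₁ v = a) (h₂ : ∑ v, c₂ v = b) :
    ∏ v, (((c₁ v + c₂ v : ℕ) : ℝ) / ((a + b : ℕ) : ℝ)) ^ (c₁ v + c₂ v)
      ≤ (∏ v, ((c₁ v : ℝ) / (a : ℝ)) ^ (c₁ v)) * ∏ v, ((c₂ v : ℝ) / (b : ℝ)) ^ (c₂ v) := by
  classical
  set θ : A → ℝ := fun v => ((c₁ v + c₂ v : ℕ) : ℝ) / ((a + b : ℕ) : ℝ) with hθ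
  have hθ0 : ∀ v, 0 ≤ θ v := fun v => by rw [hθ]; positivity
  have hθ1 : ∑ v, θ v ≤ 1 := by
    rw [hθ]
    simp only
    rw [← Finset.sum_div]
    rcases Nat.eq_zero_or_pos (a + b) with h | h
    · simp [h]
    · rw [div_le_one (by exact_mod_cast h)]
      have h₁' : ∑ v, (c₁ v : ℝ) = (a : ℝ) := by exact_mod_cast h₁
      have h₂' : ∑ v, (c₂ v : ℝ) = (b : ℝ) := by exact_mod_cast h₂
      push_cast
      rw [Finset.sum_add_distrib, h₁', h₂']
  have e₁ := gibbs c₁ θ hθ0 hθ1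
  have e₂ := gibbs c₂ θ hθ0 hθ1
  rw [h₁] at e₁
  rw [h₂] at e₂
  calc ∏ v, θ v ^ (c₁ v + c₂ v) = (∏ v, θ v ^ (c₁ v)) * ∏ v, θ v ^ (c₂ v) := by
        rw [← Finset.prod_mul_distrib]
        exact Finset.prod_congr rfl fun v _ => pow_add _ _ _
    _ ≤ _ := by
        refine mul_le_mul e₁ e₂ (Finset.prod_nonneg fun v _ => pow_nonneg (hθ0 v) _)
          (Finset.prod_nonneg fun v _ => by positivity)

/-- the equivalence used to split a sample of size `a + b`. -/
noncomputable def splitEquiv (A : Type*) (a b : ℕ) :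
    ((Fin a → A) × (Fin b → A)) ≃ (Fin (a + b) → A) :=
  (Equiv.sumArrowEquivProdArrow (Fin a) (Fin b) A).symm.trans
    (Equiv.arrowCongr finSumFinEquiv (Equiv.refl A))

lemma cnt_splitEquiv {A : Type*} [Fintype A] [DecidableEq A] {a b : ℕ}
    (p : (Fin a → A) × (Fin b → A)) (v : A) :
    cnt (splitEquiv A a b p) v = cnt p.1 v + cnt p.2 v := by
  classical
  rw [cnt_eq_sum, cnt_eq_sum, cnt_eq_sum]
  rw [← Equiv.sum_comp finSumFinEquiv
    (fun i => if (splitEquiv A a b p) i = v then 1 else 0), Fintype.sum_sum_type]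
  congr 1
  · refine Finset.sum_congr rfl fun i _ => ?_
    have : splitEquiv A a b p (finSumFinEquiv (Sum.inl i)) = p.1 i := by
      simp [splitEquiv, Equiv.sumArrowEquivProdArrow, Equiv.arrowCongr]
    rw [this]
  · refine Finset.sum_congr rfl fun i _ => ?_
    have : splitEquiv A a b p (finSumFinEquiv (Sum.inr i)) = p.2 i := by
      simp [splitEquiv, Equiv.sumArrowEquivProdArrow, Equiv.arrowCongr]
    rw [this]

lemma regretF_subadd (A : Type*) [Fintype A] [DecidableEq A] (a b : ℕ) :
    regretF A (a + b) ≤ regretF A a * regretF A b := by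
  classical
  have expand : regretF A a * regretF A b
      = ∑ p : (Fin a → A) × (Fin b → A),
          (∏ v : A, ((cnt p.1 v : ℝ) / (a : ℝ)) ^ (cnt p.1 v)) *
          (∏ v : A, ((cnt p.2 v : ℝ) / (b : ℝ)) ^ (cnt p.2 v)) := by
    rw [regretF, regretF, Finset.sum_mul_sum]
    exact (Fintype.sum_prod_type (f := fun p : (Fin a → A) × (Fin b → A) =>
      (∏ v : A, ((cnt p.1 v : ℝ) / (a : ℝ)) ^ (cnt p.1 v)) *
      (∏ v : A, ((cnt p.2 v : ℝ) / (b : ℝ)) ^ (cnt p.2 v)))).symm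
  rw [expand, regretF]
  rw [← Equiv.sum_comp (splitEquiv A a b)
    (fun f => ∏ v : A, ((cnt f v : ℝ) / ((a+b : ℕ) : ℝ)) ^ (cnt f v))]
  refine Finset.sum_le_sum fun p _ => ?_
  have hc : ∀ v, cnt (splitEquiv A a b p) v = cnt p.1 v + cnt p.2 v := cnt_splitEquiv p
  calc ∏ v : A, ((cnt (splitEquiv A a b p) v : ℝ) / ((a+b : ℕ) : ℝ)) ^ (cnt (splitEquiv A a b p) v)
      = ∏ v : A, (((cnt p.1 v + cnt p.2 v : ℕ) : ℝ) / ((a+b : ℕ) : ℝ)) ^ (cnt p.1 v + cnt p.2 v) := by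
        refine Finset.prod_congr rfl fun v _ => by rw [hc v]
    _ ≤ _ := gibbs_pair _ _ a b (sum_cnt p.1) (sum_cnt p.2)

lemma regretF_zero (A : Type*) [Fintype A] [DecidableEq A] : regretF A 0 = 1 := by
  rw [regretF]
  have h1 : ∀ f : Fin 0 → A, ∏ v : A, ((cnt f v : ℝ) / ((0:ℕ) : ℝ)) ^ (cnt f v) = 1 := by
    intro f
    refine Finset.prod_eq_one fun v _ => ?_
    have : cnt f v = 0 := by simp [cnt]
    rw [this, pow_zero]
  rw [Finset.sum_congr rfl (fun f _ => h1 f)]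
  simp

lemma one_le_regretF (A : Type*) [Fintype A] [DecidableEq A] [Nonempty A] (n : ℕ) :
    1 ≤ regretF A n := by
  classical
  obtain ⟨v₀⟩ := ‹Nonempty A›
  have hterm : ∏ v : A, ((cnt (fun _ : Fin n => v₀) v : ℝ) / (n : ℝ)) ^ (cnt (fun _ : Fin n => v₀) v)
      = 1 := by
    refine Finset.prod_eq_one fun v _ => ?_
    by_cases h : v = v₀
    · subst h
      have hcv : cnt (fun _ : Fin n => v) v = n := by simp [cnt]
      rw [hcv]
      rcases Nat.eq_zero_or_pos n with h0 | h0
      · rw [h0]; norm_num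
      · rw [div_self (by exact_mod_cast h0.ne')]; exact one_pow n
    · have hcv : cnt (fun _ : Fin n => v₀) v = 0 := by
        simp [cnt, Ne.symm h]
      rw [hcv, pow_zero]
  calc (1:ℝ) = _ := hterm.symm
    _ ≤ regretF A n :=
      Finset.single_le_sum
        (f := fun f : Fin n → A => ∏ v : A, ((cnt f v : ℝ) / (n : ℝ)) ^ (cnt f v))
        (fun f _ => Finset.prod_nonneg (fun v _ => by positivity)) (Finset.mem_univ _)

lemma regretF_le_prod (A : Type*) [Fintype A] [DecidableEq A] [Nonempty A]
    {ι : Type*} (s : Finset ι) (m : ι → ℕ) :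
    regretF A (∑ i ∈ s, m i) ≤ ∏ i ∈ s, regretF A (m i) := by
  classical
  induction s using Finset.cons_induction with
  | empty => simp [regretF_zero]
  | cons a s ha ih =>
    rw [Finset.sum_cons, Finset.prod_cons]
    calc regretF A (m a + ∑ i ∈ s, m i) ≤ regretF A (m a) * regretF A (∑ i ∈ s, m i) :=
          regretF_subadd A _ _
      _ ≤ regretF A (m a) * ∏ i ∈ s, regretF A (m i) := by
          refine mul_le_mul_of_nonneg_left ih (le_trans zero_le_one (one_le_regretF A _))

lemma log_regret_le_sum (A : Type*) [Fintype A] [DecidableEq A] [Nonempty A]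
    {ι : Type*} (s : Finset ι) (m : ι → ℕ) :
    Real.log (regret (Fintype.card A) (∑ i ∈ s, m i))
      ≤ ∑ i ∈ s, Real.log (regret (Fintype.card A) (m i)) := by
  have hpos : ∀ k : ℕ, (0:ℝ) < regret (Fintype.card A) k := fun k => by
    rw [regret_eq_regretF]; exact lt_of_lt_of_le one_pos (one_le_regretF A k)
  calc Real.log (regret (Fintype.card A) (∑ i ∈ s, m i))
      ≤ Real.log (∏ i ∈ s, regret (Fintype.card A) (m i)) := by
        refine Real.log_le_log (hpos _) ?_
        simp only [regret_eq_regretF]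
        exact regretF_le_prod A s m
    _ = ∑ i ∈ s, Real.log (regret (Fintype.card A) (m i)) :=
        Real.log_prod (fun i _ => (hpos (m i)).ne')

lemma condRegret_le_pair {n : ℕ} {A W U : Type*}
    [Fintype A] [DecidableEq A] [Nonempty A]
    [Fintype W] [DecidableEq W] [Fintype U] [DecidableEq U]
    (w : Fin n → W) (u : Fin n → U) :
    condRegret (Fintype.card A) w ≤ condRegret (Fintype.card A) (fun i => (w i, u i)) := by
  classical
  have hN : ∀ v : W, (Finset.univ.filter (fun i => w i = v)).card
      = ∑ t : U, (Finset.univ.filter (fun i : Fin n => (w i, u i) = (v, t))).card := by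
    intro v
    rw [Finset.card_filter]
    rw [Finset.sum_congr rfl (fun t _ => Finset.card_filter _ _), Finset.sum_comm]
    refine Finset.sum_congr rfl fun i _ => ?_
    by_cases h : w i = v
    · simp [h, Prod.ext_iff]
    · simp [h, Prod.ext_iff]
  rw [condRegret, condRegret, Fintype.sum_prod_type]
  refine Finset.sum_le_sum fun v _ => ?_
  rw [hN v]
  exact log_regret_le_sum A Finset.univ _


/-- Lemma 2 (forward direction): if the empirical conditional mutual information
vanishes in both directions, i.e. `Ĥ(x | z) − Ĥ(x | ⟨z, y⟩) = 0` and
`Ĥ(y | z) − Ĥ(y | ⟨z, x⟩) = 0`, then `SCI(x; y | z) ≤ 0`. -/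
theorem sci_nonpos_of_indep {X Y Z : Type*}
    [Fintype X] [Fintype Y] [Fintype Z] [DecidableEq X] [DecidableEq Y] [DecidableEq Z]
    [Nonempty X] [Nonempty Y] [Nonempty Z]
    (n : ℕ) (hn : 1 ≤ n) (x : Fin n → X) (y : Fin n → Y) (z : Fin n → Z)
    (hx : condEntN x z - condEntN x (fun i => (z i, y i)) = 0)
    (hy : condEntN y z - condEntN y (fun i => (z i, x i)) = 0) :
    SCI x y z ≤ 0 := by
  rw [SCI]
  refine max_le ?_ ?_
  · rw [ISC, hx]
    have := condRegret_le_pair (A := X) z y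
    linarith
  · rw [ISC, hy]
    have := condRegret_le_pair (A := Y) z x
    linarith
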